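/- In the power series ring ℚ(a)⟦t⟧[Q]/(Q²) (equivalently, working modulo Q² with coefficients polynomials in Q of degree ≤ 1 over ℚ[a, (1-a)⁻¹]⟦t⟦), set G = (exp((1-a)t) - a)/(1-a) + Q·exp(t), c₀ = a·Q·exp(t), and c₁ = 1 - a - a·Q·(exp(t) - exp(a·t))/(1-a). Then c₀·G + c₁·G' ≡ G'' (mod Q²) and c₀·G' + c₁·G'' ≡ G''' (mod Q²), where ' denotes d/dt. -/

import Mathlib

open PowerSeries TrivSqZeroExt

namespace BigQuantumAux

open DualNumber

theorem deriv_rescale_exp {R : Type*} [CommRing R] [Algebra ℚ R] (c : R) :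
    derivativeFun (rescale c (exp R)) = C c * rescale c (exp R) := by
  ext n
  show coeff n (d⁄dX R (rescale c (exp R))) = _
  rw [coeff_derivative, coeff_rescale, coeff_C_mul, coeff_rescale, coeff_exp, coeff_exp]
  have hq : ((1 : ℚ)/(n+1).factorial) * ((n:ℚ)+1) = 1/(n.factorial) := by
    have h0 : ((n.factorial : ℚ)) ≠ 0 := by exact_mod_cast Nat.factorial_ne_zero n
    have h1 : (((n+1).factorial : ℚ)) ≠ 0 := by exact_mod_cast Nat.factorial_ne_zero (n+1)
    field_simp
    rw [Nat.factorial_succ]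
    push_cast
    ring
  have hn : ((n : R) + 1) = algebraMap ℚ R ((n:ℚ)+1) := by push_cast; simp
  rw [hn, pow_succ, mul_assoc, ← map_mul, hq]
  ring

theorem derivFun_exp {R : Type*} [CommRing R] [Algebra ℚ R] :
    derivativeFun (exp R) = exp R := by
  have := deriv_rescale_exp (1 : R)
  simpa [rescale_one] using this

theorem derivC_mul {R : Type*} [CommRing R] (r : R) (f : PowerSeries R) :
    derivativeFun (C r * f) = C r * derivativeFun f := by
  rw [← smul_eq_C_mul, derivativeFun_smul, smul_eq_C_mul]

theorem key {R : Type*} [CommRing R] (p q r x y x' y' : PowerSeries R) :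
    (ε * inl p) * (inl x + ε * inl y) + (inl q - ε * inl r) * (inl x' + ε * inl y')
      = inl (q * x') + ε * inl (p * x + q * y' - r * x') := by
  ext <;> simp <;> ring

end BigQuantumAux

open BigQuantumAux

/-- Verification of the big quantum K-theory product `O¹ ⋆ O¹` on `P¹` modulo `Q²`:
with `G = (exp((1-a)t) - a)/(1-a) + Q·exp(t)`, `c₀ = a·Q·exp(t)`, and
`c₁ = 1 - a - a·Q·(exp(t) - exp(at))/(1-a)`, one has `c₀·G + c₁·G' ≡ G''` and
`c₀·G' + c₁·G'' ≡ G'''` modulo `Q²`.  We work in the dual numbers over `R⟦t⟧`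
(so `Q = ε` with `ε² = 0`), with `u` an inverse of `1 - a`. -/
theorem big_quantum_product_P1 {R : Type*} [CommRing R] [Algebra ℚ R]
    (a u : R) (hu : (1 - a) * u = 1) :
    let E : PowerSeries R := PowerSeries.exp R
    -- the componentwise formal derivative d/dt on R⟦t⟧[ε]
    let D : DualNumber (PowerSeries R) → DualNumber (PowerSeries R) :=
      fun x => inl (PowerSeries.derivativeFun x.fst) +
        DualNumber.eps * inl (PowerSeries.derivativeFun x.snd)
    -- G = (exp((1-a)t) - a)/(1-a) + Q exp(t)
    let G : DualNumber (PowerSeries R) :=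
      inl (PowerSeries.C u * (PowerSeries.rescale (1 - a) E - PowerSeries.C a)) +
        DualNumber.eps * inl E
    -- c₀ = a Q exp(t)
    let c₀ : DualNumber (PowerSeries R) :=
      DualNumber.eps * inl (PowerSeries.C a * E)
    -- c₁ = 1 - a - a Q (exp(t) - exp(at))/(1-a)
    let c₁ : DualNumber (PowerSeries R) :=
      inl (PowerSeries.C (1 - a)) -
        DualNumber.eps * inl (PowerSeries.C a * PowerSeries.C u *
          (E - PowerSeries.rescale a E))
    c₀ * G + c₁ * D G = D (D G) ∧
      c₀ * D G + c₁ * D (D G) = D (D (D G)) := by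
  intro E D G c₀ c₁
  have hD : ∀ x y : PowerSeries R, D (TrivSqZeroExt.inl x + DualNumber.eps * TrivSqZeroExt.inl y)
      = TrivSqZeroExt.inl (derivativeFun x) + DualNumber.eps * TrivSqZeroExt.inl (derivativeFun y) := by
    intro x y
    simp only [D]
    simp
  have hE : derivativeFun E = E := derivFun_exp
  have hres : ∀ c : R, derivativeFun (rescale c E) = C c * rescale c E :=
    fun c => deriv_rescale_exp c
  have hg0 : derivativeFun (C u * (rescale (1 - a) E - C a)) = rescale (1 - a) E := by
    rw [derivC_mul, sub_eq_add_neg, ← map_neg, derivativeFun_add,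
      (show derivativeFun (C (-a) : PowerSeries R) = 0 from derivative_C), add_zero,
      hres _, ← mul_assoc, ← map_mul, mul_comm u, hu, map_one, one_mul]
  have hDG : D G = TrivSqZeroExt.inl (rescale (1 - a) E) + DualNumber.eps * TrivSqZeroExt.inl E := by
    rw [show G = TrivSqZeroExt.inl (C u * (rescale (1 - a) E - C a)) +
        DualNumber.eps * TrivSqZeroExt.inl E from rfl, hD, hg0, hE]
  have hD2 : D (D G) = TrivSqZeroExt.inl (C (1 - a) * rescale (1 - a) E) +
      DualNumber.eps * TrivSqZeroExt.inl E := by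
    rw [hDG, hD, hres _, hE]
  have hD3 : D (D (D G)) = TrivSqZeroExt.inl (C (1 - a) * (C (1 - a) * rescale (1 - a) E)) +
      DualNumber.eps * TrivSqZeroExt.inl E := by
    rw [hD2, hD, derivC_mul, hres _, hE]
  have h2 : rescale a E * rescale (1 - a) E = E := by
    rw [exp_mul_exp_eq_exp_add, show a + (1 - a) = 1 by ring]
    simp [rescale_one, E]
  have h1 : C u * ((1 : PowerSeries R) - C a) = 1 := by
    rw [show (1 : PowerSeries R) - C a = C (1 - a) by simp [map_sub], ← map_mul,
      mul_comm u, hu, map_one]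
  have e1 : C a * E * (C u * (rescale (1 - a) E - C a)) + C (1 - a) * E -
      C a * C u * (E - rescale a E) * rescale (1 - a) E = E := by
    simp only [map_sub, map_one]
    linear_combination (C a * C u) * h2 + (C a * E) * h1
  have e2 : C a * E * rescale (1 - a) E + C (1 - a) * E -
      C a * C u * (E - rescale a E) * (C (1 - a) * rescale (1 - a) E) = E := by
    simp only [map_sub, map_one]
    linear_combination (C a * C u * (1 - C a)) * h2 + (C a * E - C a * E * rescale (1 - a) E) * h1
  constructor
  · rw [hD2]
    show DualNumber.eps * TrivSqZeroExt.inl (C a * E) * G +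
      (TrivSqZeroExt.inl (C (1 - a)) - DualNumber.eps * TrivSqZeroExt.inl
        (C a * C u * (E - rescale a E))) * D G = _
    rw [hDG, show G = TrivSqZeroExt.inl (C u * (rescale (1 - a) E - C a)) +
        DualNumber.eps * TrivSqZeroExt.inl E from rfl, key, e1]
  · rw [hD3]
    show DualNumber.eps * TrivSqZeroExt.inl (C a * E) * D G +
      (TrivSqZeroExt.inl (C (1 - a)) - DualNumber.eps * TrivSqZeroExt.inl
        (C a * C u * (E - rescale a E))) * D (D G) = _
    rw [hD2, hDG, key, e2]
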